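/- Fix an integer d ≥ 1 and a compact set K ⊆ ℂ². For each m ∈ ℕ let F_m ⊆ K be a nonempty finite set which is contained in the zero locus of some nonzero polynomial P_m ∈ ℂ[x,y] of total degree at most d, and let μ_m be the uniform probability measure on F_m. If some subsequence of (μ_m) converges weakly to a probability measure μ on ℂ², then μ is supported on the zero locus of some nonzero polynomial of total degree at most d. -/

import Mathlib

open MvPolynomial MeasureTheory Filter

noncomputable section

def Taux (d : ℕ) : Finset (Fin 2 →₀ ℕ) :=
  (Finset.Iic (Finsupp.equivFunOnFinite.symm fun _ => (d : ℕ))).filter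
    fun s => (s.sum fun _ e => e) ≤ d

lemma sum_eq_aux (s : Fin 2 →₀ ℕ) : (s.sum fun _ e => e) = s 0 + s 1 := by
  rw [Finsupp.sum_fintype _ _ (fun _ => rfl), Fin.sum_univ_two]

lemma mem_Taux {d : ℕ} {s : Fin 2 →₀ ℕ} (h : (s.sum fun _ e => e) ≤ d) : s ∈ Taux d := by
  simp only [Taux, Finset.mem_filter, Finset.mem_Iic]
  refine ⟨?_, h⟩
  rw [Finsupp.le_def]
  intro i
  have hs : s 0 + s 1 ≤ d := by rw [← sum_eq_aux]; exact h
  have h2 : s i ≤ s 0 + s 1 := by fin_cases i <;> simp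
  simpa using h2.trans hs

lemma deg_Taux {d : ℕ} {s : Fin 2 →₀ ℕ} (h : s ∈ Taux d) : s 0 + s 1 ≤ d := by
  rw [← sum_eq_aux]
  exact (Finset.mem_filter.mp h).2

def Eaux (d : ℕ) (w : Taux d → ℂ) (p : ℂ × ℂ) : ℂ :=
  ∑ s ∈ (Taux d).attach, w s * (p.1 ^ (s.1 0) * p.2 ^ (s.1 1))

lemma Eaux_smul (d : ℕ) (a : ℂ) (w : Taux d → ℂ) (p : ℂ × ℂ) :
    Eaux d (a • w) p = a * Eaux d w p := by
  simp [Eaux, Finset.mul_sum, mul_assoc]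

lemma Eaux_sub (d : ℕ) (w w' : Taux d → ℂ) (p : ℂ × ℂ) :
    Eaux d (w - w') p = Eaux d w p - Eaux d w' p := by
  simp [Eaux, sub_mul, Finset.sum_sub_distrib]

lemma Eaux_continuous (d : ℕ) (w : Taux d → ℂ) : Continuous (Eaux d w) := by
  apply continuous_finset_sum
  intro s _
  fun_prop

lemma Eaux_bound (d : ℕ) {R : ℝ} (hR : 1 ≤ R) {p : ℂ × ℂ} (h1 : ‖p.1‖ ≤ R)
    (h2 : ‖p.2‖ ≤ R) (w : Taux d → ℂ) :
    ‖Eaux d w p‖ ≤ ((Taux d).card : ℝ) * R ^ d * ‖w‖ := by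
  have hR0 : (0:ℝ) ≤ R := zero_le_one.trans hR
  calc ‖Eaux d w p‖ ≤ ∑ s ∈ (Taux d).attach, ‖w s * (p.1 ^ (s.1 0) * p.2 ^ (s.1 1))‖ :=
        norm_sum_le _ _
    _ ≤ ∑ _s ∈ (Taux d).attach, ‖w‖ * R ^ d := by
        apply Finset.sum_le_sum
        intro s _
        rw [norm_mul, norm_mul, norm_pow, norm_pow]
        have hw : ‖w s‖ ≤ ‖w‖ := norm_le_pi_norm w s
        have hb : ‖p.1‖ ^ (s.1 0) * ‖p.2‖ ^ (s.1 1) ≤ R ^ d := by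
          calc ‖p.1‖ ^ (s.1 0) * ‖p.2‖ ^ (s.1 1) ≤ R ^ (s.1 0) * R ^ (s.1 1) := by
                gcongr <;> positivity
            _ = R ^ (s.1 0 + s.1 1) := (pow_add R _ _).symm
            _ ≤ R ^ d := pow_le_pow_right₀ hR (deg_Taux s.2)
        exact mul_le_mul hw hb (by positivity) (norm_nonneg _)
    _ = ((Taux d).card : ℝ) * R ^ d * ‖w‖ := by
        rw [Finset.sum_const, Finset.card_attach, nsmul_eq_mul]; ring

def Qaux (d : ℕ) (ℓ : Taux d → ℂ) : MvPolynomial (Fin 2) ℂ :=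
  ∑ s ∈ (Taux d).attach, monomial s.1 (ℓ s)

lemma coeff_Qaux (d : ℕ) (ℓ : Taux d → ℂ) (u : Fin 2 →₀ ℕ) :
    coeff u (Qaux d ℓ) = if hu : u ∈ Taux d then ℓ ⟨u, hu⟩ else 0 := by
  rw [Qaux, MvPolynomial.coeff_sum]
  split
  · next hu =>
    rw [Finset.sum_eq_single (⟨u, hu⟩ : {x // x ∈ Taux d})]
    · simp [coeff_monomial]
    · intro b _ hb
      rw [coeff_monomial, if_neg]
      intro hbu
      exact hb (Subtype.ext hbu)
    · intro hmem
      exact absurd (Finset.mem_attach _ _) hmem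
  · next hu =>
    apply Finset.sum_eq_zero
    intro b _
    rw [coeff_monomial, if_neg]
    intro hbu
    exact hu (hbu ▸ b.2)

lemma totalDegree_Qaux (d : ℕ) (ℓ : Taux d → ℂ) : (Qaux d ℓ).totalDegree ≤ d := by
  apply MvPolynomial.totalDegree_finsetSum_le
  intro s _
  exact (totalDegree_monomial_le _ _).trans ((Finset.mem_filter.mp s.2).2)

lemma eval_Qaux (d : ℕ) (ℓ : Taux d → ℂ) (p : ℂ × ℂ) :
    eval ![p.1, p.2] (Qaux d ℓ) = Eaux d ℓ p := by
  rw [Qaux, map_sum, Eaux]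
  apply Finset.sum_congr rfl
  intro s _
  rw [eval_monomial, Finsupp.prod_fintype _ _ (fun _ => pow_zero _), Fin.prod_univ_two]
  simp

lemma rep_Qaux {d : ℕ} {P : MvPolynomial (Fin 2) ℂ} (hP : P.totalDegree ≤ d) :
    P = Qaux d (fun s => coeff s.1 P) := by
  apply MvPolynomial.ext
  intro u
  rw [coeff_Qaux]
  split
  · rfl
  · next hu =>
    by_contra h
    exact hu (mem_Taux ((MvPolynomial.le_totalDegree
      (MvPolynomial.mem_support_iff.mpr h)).trans hP))

end


/-- Lemma 3.4. Weak limits of uniform measures on finite subsets of a fixed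
compact set, each lying on a curve of degree at most `d`, are supported on a curve of degree at
most `d`. -/
theorem statement15 (d : ℕ) (hd : 1 ≤ d) (K : Set (ℂ × ℂ)) (hK : IsCompact K)
    (F : ℕ → Finset (ℂ × ℂ)) (hFne : ∀ m, (F m).Nonempty) (hFK : ∀ m, ↑(F m) ⊆ K)
    (P : ℕ → MvPolynomial (Fin 2) ℂ) (hP0 : ∀ m, P m ≠ 0)
    (hPd : ∀ m, (P m).totalDegree ≤ d)
    (hPF : ∀ m, ∀ p ∈ F m, eval ![p.1, p.2] (P m) = 0)
    (μ : MeasureTheory.Measure (ℂ × ℂ)) [MeasureTheory.IsProbabilityMeasure μ]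
    (φ : ℕ → ℕ) (hφ : StrictMono φ)
    (hconv : ∀ h : BoundedContinuousFunction (ℂ × ℂ) ℝ,
      Filter.Tendsto (fun k => (∑ p ∈ F (φ k), h p) / ((F (φ k)).card : ℝ))
        Filter.atTop (nhds (∫ p, h p ∂μ))) :
    ∃ Q : MvPolynomial (Fin 2) ℂ, Q ≠ 0 ∧ Q.totalDegree ≤ d ∧
      μ {p : ℂ × ℂ | eval ![p.1, p.2] Q ≠ 0} = 0 := by
  classical
  -- coefficient vectors
  set c : ℕ → (Taux d → ℂ) := fun m s => coeff s.1 (P m) with hc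
  have hrep : ∀ m, P m = Qaux d (c m) := fun m => rep_Qaux (hPd m)
  have hc0 : ∀ m, c m ≠ 0 := by
    intro m h
    apply hP0 m
    rw [hrep m, h]
    simp [Qaux]
  have hcn : ∀ m, ‖c m‖ ≠ 0 := fun m => norm_ne_zero_iff.mpr (hc0 m)
  set v : ℕ → (Taux d → ℂ) := fun m => (‖c m‖)⁻¹ • c m with hv
  have hv1 : ∀ m, v m ∈ Metric.sphere (0 : Taux d → ℂ) 1 := by
    intro m
    simp only [Metric.mem_sphere, dist_zero_right, hv, norm_smul, norm_inv, norm_norm]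
    exact inv_mul_cancel₀ (hcn m)
  -- extract convergent subsequence
  obtain ⟨ℓ, hℓmem, ψ, hψ, hψconv⟩ :=
    (isCompact_sphere (0 : Taux d → ℂ) 1).tendsto_subseq (fun k => hv1 (φ k))
  -- bounds from compactness of K
  obtain ⟨R0, hR0⟩ := hK.isBounded.subset_closedBall 0
  set R : ℝ := max R0 1 with hR
  have hR1 : (1:ℝ) ≤ R := le_max_right _ _
  have hRK : ∀ p ∈ K, ‖p.1‖ ≤ R ∧ ‖p.2‖ ≤ R := by
    intro p hp
    have hpn : ‖p‖ ≤ R := le_trans (by simpa using hR0 hp) (le_max_left _ _)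
    exact ⟨(norm_fst_le p).trans hpn, (norm_snd_le p).trans hpn⟩
  set C : ℝ := ((Taux d).card : ℝ) * R ^ d with hC
  have hC0 : 0 ≤ C := mul_nonneg (Nat.cast_nonneg _) (pow_nonneg (zero_le_one.trans hR1) _)
  -- E vanishes on F m for the normalized vectors
  have hEv : ∀ m, ∀ p ∈ F m, Eaux d (v m) p = 0 := by
    intro m p hp
    have h0 : Eaux d (c m) p = 0 := by
      rw [← eval_Qaux, ← hrep m]; exact hPF m p hp
    rw [hv]
    simp only []
    rw [show ((‖c m‖)⁻¹ : ℝ) • c m = ((‖c m‖)⁻¹ : ℂ) • c m by norm_cast]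
    rw [Eaux_smul, h0, mul_zero]
  have key : ∀ m, ∀ p ∈ F m, ‖Eaux d ℓ p‖ ≤ C * ‖ℓ - v m‖ := by
    intro m p hp
    have hpK := hFK m hp
    have h1 := (hRK p hpK).1
    have h2 := (hRK p hpK).2
    have : Eaux d ℓ p = Eaux d (ℓ - v m) p := by
      rw [Eaux_sub, hEv m p hp, sub_zero]
    rw [this, hC]
    exact Eaux_bound d hR1 h1 h2 _
  -- the test function
  have hgc : Continuous fun p : ℂ × ℂ => min 1 ‖Eaux d ℓ p‖ :=
    continuous_const.min (Eaux_continuous d ℓ).norm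
  have hgnn : ∀ p : ℂ × ℂ, 0 ≤ min 1 ‖Eaux d ℓ p‖ := fun p =>
    le_min zero_le_one (norm_nonneg _)
  have hgle1 : ∀ p : ℂ × ℂ, min 1 ‖Eaux d ℓ p‖ ≤ 1 := fun p => min_le_left _ _
  set h : BoundedContinuousFunction (ℂ × ℂ) ℝ :=
    BoundedContinuousFunction.mkOfBound ⟨fun p => min 1 ‖Eaux d ℓ p‖, hgc⟩ 2
      (fun x y => by
        rw [Real.dist_eq]
        have := abs_sub_abs_le_abs_sub (min 1 ‖Eaux d ℓ x‖) (min 1 ‖Eaux d ℓ y‖)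
        calc |min 1 ‖Eaux d ℓ x‖ - min 1 ‖Eaux d ℓ y‖|
            ≤ |min 1 ‖Eaux d ℓ x‖| + |min 1 ‖Eaux d ℓ y‖| := abs_sub _ _
          _ ≤ 1 + 1 := by
              gcongr <;> rw [abs_of_nonneg (hgnn _)] <;> [exact hgle1 x; exact hgle1 y]
          _ = 2 := by norm_num) with hdefh
  have hconvh := (hconv h).comp hψ.tendsto_atTop
  -- the averages along the subsequence tend to 0
  have hupper : Tendsto (fun k => C * ‖ℓ - v (φ (ψ k))‖) atTop (nhds 0) := by
    have h1 : Tendsto (fun k => ℓ - v (φ (ψ k))) atTop (nhds 0) := by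
      have h2 : Tendsto (fun _ : ℕ => ℓ) atTop (nhds ℓ) := tendsto_const_nhds
      have := h2.sub hψconv
      simpa using this
    have := (h1.norm).const_mul C
    simpa using this
  have hlim0 : Tendsto (fun k => (∑ p ∈ F (φ (ψ k)), h p) / ((F (φ (ψ k))).card : ℝ))
      atTop (nhds 0) := by
    apply tendsto_of_tendsto_of_tendsto_of_le_of_le tendsto_const_nhds hupper
    · intro k
      apply div_nonneg _ (Nat.cast_nonneg _)
      exact Finset.sum_nonneg fun p _ => hgnn p
    · intro k
      set m := φ (ψ k)
      have hcard : (0:ℝ) < ((F m).card : ℝ) := by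
        exact_mod_cast Finset.card_pos.mpr (hFne m)
      rw [div_le_iff₀ hcard]
      calc ∑ p ∈ F m, h p ≤ ∑ _p ∈ F m, C * ‖ℓ - v m‖ := by
            apply Finset.sum_le_sum
            intro p hp
            exact (min_le_right _ _).trans (key m p hp)
        _ = C * ‖ℓ - v m‖ * ((F m).card : ℝ) := by
            rw [Finset.sum_const, nsmul_eq_mul]; ring
  have hI : ∫ p, h p ∂μ = 0 := tendsto_nhds_unique hconvh hlim0
  have hae : (fun p => h p) =ᵐ[μ] 0 :=
    (MeasureTheory.integral_eq_zero_iff_of_nonneg (fun p => hgnn p) (h.integrable μ)).mp hI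
  refine ⟨Qaux d ℓ, ?_, totalDegree_Qaux d ℓ, ?_⟩
  · -- Q ≠ 0
    have hℓn : ‖ℓ‖ = 1 := by simpa using hℓmem
    have hℓ0 : ℓ ≠ 0 := by
      intro h0
      rw [h0, norm_zero] at hℓn
      exact one_ne_zero hℓn.symm
    obtain ⟨s, hs⟩ := Function.ne_iff.mp hℓ0
    intro hQ
    apply hs
    have := coeff_Qaux d ℓ s.1
    rw [hQ] at this
    simp only [coeff_zero] at this
    rw [dif_pos s.2] at this
    simpa using this.symm
  · -- measure zero
    have hnull : μ {p : ℂ × ℂ | ¬ (h p = 0)} = 0 := by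
      have := hae
      rw [Filter.EventuallyEq, MeasureTheory.ae_iff] at this
      simpa using this
    apply MeasureTheory.measure_mono_null _ hnull
    intro p hp
    simp only [Set.mem_setOf_eq] at hp ⊢
    rw [eval_Qaux] at hp
    have hpos : 0 < min 1 ‖Eaux d ℓ p‖ := lt_min one_pos (norm_pos_iff.mpr hp)
    intro h0
    rw [show (h p : ℝ) = min 1 ‖Eaux d ℓ p‖ from rfl] at h0
    exact absurd h0 (ne_of_gt hpos)
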